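/- Let p ≡ 7 (mod 8) be a positive prime and F = ℚ(√p). Then 2 = U_F · L₂² for the fundamental unit U_F of F and some L₂ ∈ O_F; in particular, the ideal (2) of O_F is the square of the principal ideal (L₂), and √2 ∈ F(√U_F). -/

import Mathlib

set_option maxHeartbeats 1000000
set_option synthInstance.maxHeartbeats 100000

open NumberField IntermediateField Polynomial

/-- `U` is the fundamental unit of the real quadratic field `F`: it is the smallest
unit of `𝓞 F` greater than `1` in the real embedding. -/
def IsFundamentalUnit (F : IntermediateField ℚ ℝ) (U : (𝓞 F)ˣ) : Prop :=
  1 < ((algebraMap (𝓞 F) F (U : 𝓞 F) : F) : ℝ) ∧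
  ∀ V : (𝓞 F)ˣ, 1 < ((algebraMap (𝓞 F) F (V : 𝓞 F) : F) : ℝ) →
    ((algebraMap (𝓞 F) F (U : 𝓞 F) : F) : ℝ) ≤ ((algebraMap (𝓞 F) F (V : 𝓞 F) : F) : ℝ)



lemma pos_sq_of_coprime {a b c : ℤ} (h : IsCoprime a b) (heq : a * b = c ^ 2)
    (ha : 0 < a) : ∃ a0 : ℤ, 0 ≤ a0 ∧ a = a0 ^ 2 := by
  obtain ⟨a0, h0 | h0⟩ := Int.sq_of_isCoprime h heq
  · exact ⟨|a0|, abs_nonneg _, by rw [h0, sq_abs]⟩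
  · nlinarith [sq_nonneg a0]

lemma rat_int_of_prime_mul_sq (pn : ℕ) (hp : pn.Prime) (q : ℚ) (m : ℤ)
    (h : (pn : ℚ) * q ^ 2 = (m : ℚ)) : ∃ b : ℤ, (b : ℚ) = q := by
  have hq : (q : ℚ) * q.den = q.num := Rat.mul_den_eq_num q
  have hnum : (pn : ℚ) * (q.num : ℚ) ^ 2 = m * (q.den : ℚ) ^ 2 := by
    rw [← hq]; ring_nf; ring_nf at h; nlinarith [h]
  have hz : (pn : ℤ) * q.num ^ 2 = m * (q.den : ℤ) ^ 2 := by exact_mod_cast hnum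
  have hcop : IsCoprime (q.num) (q.den : ℤ) :=
    Int.isCoprime_iff_gcd_eq_one.mpr (by simpa [Int.gcd] using q.reduced)
  have hdvd : ((q.den : ℤ)) ^ 2 ∣ (pn : ℤ) := by
    have h1 : ((q.den : ℤ)) ^ 2 ∣ (pn : ℤ) * q.num ^ 2 := ⟨m, by linarith [hz]⟩
    exact (IsCoprime.pow (hcop.symm)).dvd_of_dvd_mul_right h1
  have hden1 : q.den = 1 := by
    by_contra hne
    have hdp : q.den ^ 2 ∣ pn := by exact_mod_cast hdvd
    have h2 : 2 ≤ q.den := by have := q.den_pos; omega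
    have hd2 : q.den ∣ pn := dvd_trans (dvd_pow_self q.den two_ne_zero) hdp
    rcases hp.eq_one_or_self_of_dvd q.den hd2 with h3 | h3
    · omega
    · rw [h3] at hdp
      have := Nat.le_of_dvd hp.pos hdp
      nlinarith [hp.two_le]
  exact ⟨q.num, by rw [← Rat.num_div_den q, hden1]; simp⟩


lemma pos_sq_of_coprime' {a b c : ℤ} (h : IsCoprime a b) (heq : a * b = c ^ 2)
    (ha : 0 < a) : ∃ a0 : ℤ, 0 ≤ a0 ∧ a = a0 ^ 2 := by
  obtain ⟨a0, h0 | h0⟩ := Int.sq_of_isCoprime h heq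
  · exact ⟨|a0|, abs_nonneg _, by rw [h0, sq_abs]⟩
  · nlinarith [sq_nonneg a0]

lemma pos_factor {p m c : ℤ} (hp : 0 < p) (hc : 0 < c) (h : c = p * m) : 0 < m := by
  nlinarith

lemma one_le_of_sq {a c : ℤ} (h0 : 0 ≤ a) (hc : 0 < c) (h : c = a ^ 2) : 1 ≤ a := by
  nlinarith

lemma t_ge_two {p t u : ℤ} (hp : 7 ≤ p) (hu : 1 ≤ u) (ht : 1 ≤ t)
    (h : t ^ 2 - p * u ^ 2 = 1) : 2 ≤ t := by nlinarith

lemma no_mod8 (p a b : ℤ) (hp8 : p % 8 = 7) (h : p * b ^ 2 - a ^ 2 = 2) : False := by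
  obtain ⟨k, hk⟩ : ∃ k, p = 8 * k + 7 := ⟨p / 8, by omega⟩
  have h8 : ∀ x y : ZMod 8, 7 * x ^ 2 - y ^ 2 ≠ 2 := by decide
  apply h8 (b : ZMod 8) (a : ZMod 8)
  have h0 : ((8 : ℤ) : ZMod 8) = 0 := by decide
  have hc := congrArg (Int.cast : ℤ → ZMod 8) h
  push_cast [hk] at hc
  push_cast at h0
  linear_combination hc - (k : ZMod 8) * (b : ZMod 8) ^ 2 * h0

lemma no_neg_one_sq (pn : ℕ) (hp : pn.Prime) (hp4 : pn % 4 = 3) (x y : ℤ)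
    (h : y ^ 2 + 1 = (pn : ℤ) * x ^ 2) : False := by
  haveI : Fact pn.Prime := ⟨hp⟩
  have hns : ¬ IsSquare (-1 : ZMod pn) := by
    rw [ZMod.exists_sq_eq_neg_one_iff]; omega
  apply hns
  refine ⟨(y : ZMod pn), ?_⟩
  have hc := congrArg (Int.cast : ℤ → ZMod pn) h
  push_cast at hc
  rw [ZMod.natCast_self] at hc
  linear_combination -hc

lemma sq_eq_of_pos {a u : ℤ} (ha : 1 ≤ a) (hu : 1 ≤ u) (h : a ^ 2 = u ^ 2) : a = u := by
  have hsq : (a - u) * (a + u) = 0 := by linear_combination h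
  rcases mul_eq_zero.mp hsq with h2 | h2
  · linarith only [h2]
  · linarith only [h2, ha, hu]

lemma pell_cases (pn : ℕ) (hp : pn.Prime) (hp8 : pn % 8 = 7) (t u : ℤ)
    (ht : 1 ≤ t) (hu : 1 ≤ u) (h : t ^ 2 - (pn : ℤ) * u ^ 2 = 1) :
    (∃ a b : ℤ, 1 ≤ a ∧ 1 ≤ b ∧ a ^ 2 - (pn : ℤ) * b ^ 2 = 2 ∧ a * b = u ∧
        a ^ 2 + (pn : ℤ) * b ^ 2 = 2 * t) ∨
    (∃ a b : ℤ, 1 ≤ a ∧ 1 ≤ b ∧ a ^ 2 - (pn : ℤ) * b ^ 2 = 1 ∧ 2 * (a * b) = u ∧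
        a ^ 2 + (pn : ℤ) * b ^ 2 = t) := by
  have hpZ : Prime ((pn : ℤ)) := Nat.prime_iff_prime_int.mp hp
  have hp7 : (7 : ℤ) ≤ (pn : ℤ) := by exact_mod_cast (by omega : 7 ≤ pn)
  have hp8' : (pn : ℤ) % 8 = 7 := by omega
  have ht2 : 2 ≤ t := t_ge_two hp7 hu ht h
  have hfact : (t + 1) * (t - 1) = (pn : ℤ) * u ^ 2 := by linear_combination h
  have hpdvd : (pn : ℤ) ∣ (t + 1) * (t - 1) := ⟨u ^ 2, hfact⟩
  rcases Int.even_or_odd t with ⟨w, hw⟩ | ⟨s, hs⟩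
  · -- t even
    have hcop : IsCoprime (t + 1) (t - 1) := ⟨1 - w, w, by rw [hw]; ring⟩
    rcases hpZ.2.2 _ _ hpdvd with hd | hd
    · -- p ∣ t + 1 : contradiction mod 8
      exfalso
      obtain ⟨m, hm⟩ := hd
      have hmul : m * (t - 1) = u ^ 2 := by
        have h2 : (pn : ℤ) * (m * (t - 1)) = (pn : ℤ) * u ^ 2 := by rw [← hfact, hm]; ring
        exact mul_left_cancel₀ hpZ.ne_zero h2
      have hmpos : 0 < m := pos_factor (by linarith only [hp7]) (by linarith only [ht2]) hm
      have hcop2 : IsCoprime m (t - 1) :=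
        hcop.of_isCoprime_of_dvd_left ⟨(pn : ℤ), by rw [hm]; ring⟩
      obtain ⟨b, hb0, hb⟩ := pos_sq_of_coprime' hcop2 hmul hmpos
      obtain ⟨a, ha0, ha⟩ := pos_sq_of_coprime' hcop2.symm
        (by rw [mul_comm]; exact hmul) (by linarith only [ht2])
      have hpb : (pn : ℤ) * b ^ 2 = t + 1 := by rw [← hb]; exact hm.symm
      exact no_mod8 (pn : ℤ) a b hp8' (by linarith only [ha, hpb])
    · -- p ∣ t - 1 : main case
      obtain ⟨m, hm⟩ := hd
      have hmul : (t + 1) * m = u ^ 2 := by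
        have h2 : (pn : ℤ) * ((t + 1) * m) = (pn : ℤ) * u ^ 2 := by rw [← hfact, hm]; ring
        exact mul_left_cancel₀ hpZ.ne_zero h2
      have hmpos : 0 < m := pos_factor (by linarith only [hp7]) (by linarith only [ht2]) hm
      have hcop2 : IsCoprime (t + 1) m :=
        hcop.of_isCoprime_of_dvd_right ⟨(pn : ℤ), by rw [hm]; ring⟩
      obtain ⟨a, ha0, ha⟩ := pos_sq_of_coprime' hcop2 hmul (by linarith only [ht2])
      obtain ⟨b, hb0, hb⟩ := pos_sq_of_coprime' hcop2.symm (by rw [mul_comm]; exact hmul) hmpos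
      left
      have hpb : (pn : ℤ) * b ^ 2 = t - 1 := by rw [← hb]; exact hm.symm
      have ha1 : 1 ≤ a := one_le_of_sq ha0 (by linarith only [ht2]) ha
      have hb1 : 1 ≤ b := one_le_of_sq hb0 hmpos hb
      refine ⟨a, b, ha1, hb1, by linarith only [ha, hpb], ?_, by linarith only [ha, hpb]⟩
      refine sq_eq_of_pos (by nlinarith [ha1, hb1]) hu ?_
      rw [mul_pow, ← ha, ← hb]; exact hmul
  · -- t odd
    have hodd : t = 2 * s + 1 := hs
    obtain ⟨v, hv⟩ : ∃ v, u = 2 * v := by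
      rcases Int.even_or_odd u with ⟨v, hv⟩ | ⟨c, hc⟩
      · exact ⟨v, by omega⟩
      · exfalso
        obtain ⟨k, hk⟩ : ∃ k, (pn : ℤ) = 8 * k + 7 := ⟨(pn : ℤ) / 8, by omega⟩
        have hOdd : Odd ((pn : ℤ) * u ^ 2) :=
          Odd.mul ⟨4 * k + 3, by omega⟩ (Odd.pow ⟨c, by omega⟩)
        have hEven : Even ((pn : ℤ) * u ^ 2) := by
          refine ⟨2 * (s * (s + 1)), ?_⟩
          rw [← hfact, hodd]; ring
        exact (Int.not_odd_iff_even.mpr hEven) hOdd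
    have hfact2 : s * (s + 1) = (pn : ℤ) * v ^ 2 := by
      rw [hodd, hv] at hfact
      have h4 : 4 * (s * (s + 1)) = 4 * ((pn : ℤ) * v ^ 2) := by linear_combination hfact
      linarith only [h4]
    have hs1 : 1 ≤ s := by omega
    have hcop : IsCoprime s (s + 1) := ⟨-1, 1, by ring⟩
    have hpdvd2 : (pn : ℤ) ∣ s * (s + 1) := ⟨v ^ 2, hfact2⟩
    rcases hpZ.2.2 _ _ hpdvd2 with hd | hd
    · -- p ∣ s : good case (second disjunct)
      obtain ⟨m, hm⟩ := hd
      have hmul : (s + 1) * m = v ^ 2 := by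
        have h2 : (pn : ℤ) * ((s + 1) * m) = (pn : ℤ) * v ^ 2 := by rw [← hfact2, hm]; ring
        exact mul_left_cancel₀ hpZ.ne_zero h2
      have hmpos : 0 < m := pos_factor (by linarith only [hp7]) (by linarith only [hs1]) hm
      have hcop2 : IsCoprime (s + 1) m :=
        (hcop.symm).of_isCoprime_of_dvd_right ⟨(pn : ℤ), by rw [hm]; ring⟩
      obtain ⟨a, ha0, ha⟩ := pos_sq_of_coprime' hcop2 hmul (by linarith only [hs1])
      obtain ⟨b, hb0, hb⟩ := pos_sq_of_coprime' hcop2.symm (by rw [mul_comm]; exact hmul) hmpos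
      right
      have hpb : (pn : ℤ) * b ^ 2 = s := by rw [← hb]; exact hm.symm
      have ha1 : 1 ≤ a := one_le_of_sq ha0 (by linarith only [hs1]) ha
      have hb1 : 1 ≤ b := one_le_of_sq hb0 hmpos hb
      have hv1 : 1 ≤ v := by omega
      have hab : a * b = v := by
        refine sq_eq_of_pos (by nlinarith [ha1, hb1]) hv1 ?_
        rw [mul_pow, ← ha, ← hb]; exact hmul
      exact ⟨a, b, ha1, hb1, by linarith only [ha, hpb],
        by rw [hab]; omega, by linarith only [ha, hpb, hodd]⟩
    · -- p ∣ s + 1 : -1 is a square mod p, contradiction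
      exfalso
      obtain ⟨m, hm⟩ := hd
      have hmul : m * s = v ^ 2 := by
        have h2 : (pn : ℤ) * (m * s) = (pn : ℤ) * v ^ 2 := by rw [← hfact2, hm]; ring
        exact mul_left_cancel₀ hpZ.ne_zero h2
      have hmpos : 0 < m := pos_factor (by linarith only [hp7]) (by linarith only [hs1]) hm
      have hcop2 : IsCoprime m s :=
        (hcop.symm).of_isCoprime_of_dvd_left ⟨(pn : ℤ), by rw [hm]; ring⟩
      obtain ⟨x, hx0, hx⟩ := pos_sq_of_coprime' hcop2 hmul hmpos
      obtain ⟨y, hy0, hy⟩ := pos_sq_of_coprime' hcop2.symm (by rw [mul_comm]; exact hmul)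
        (by linarith only [hs1])
      have hpx : (pn : ℤ) * x ^ 2 = s + 1 := by rw [← hx]; exact hm.symm
      exact no_neg_one_sq pn hp (by omega) x y (by linarith only [hy, hpx])



lemma repr_eq_zero {p : ℕ} (hp : p.Prime) {x y : ℚ}
    (h : (x : ℝ) + (y : ℝ) * Real.sqrt p = 0) : x = 0 ∧ y = 0 := by
  by_cases hy : y = 0
  · subst hy
    norm_num at h
    exact ⟨by exact_mod_cast h, rfl⟩
  · exfalso
    have hyR : (y : ℝ) ≠ 0 := by exact_mod_cast hy
    refine hp.irrational_sqrt ⟨-x / y, ?_⟩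
    push_cast
    rw [div_eq_iff hyR]
    linarith [h]

/-- The subalgebra `ℚ + ℚ√p` of `ℝ`. -/
def Qsqrt (p : ℕ) : Subalgebra ℚ ℝ where
  carrier := {z | ∃ x y : ℚ, z = (x : ℝ) + (y : ℝ) * Real.sqrt p}
  mul_mem' := by
    rintro w z ⟨x, y, rfl⟩ ⟨x', y', rfl⟩
    refine ⟨x * x' + p * (y * y'), x * y' + x' * y, ?_⟩
    have hr : Real.sqrt p * Real.sqrt p = (p : ℝ) := Real.mul_self_sqrt (by positivity)
    push_cast
    linear_combination ((y : ℝ) * (y' : ℝ)) * hr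
  add_mem' := by
    rintro w z ⟨x, y, rfl⟩ ⟨x', y', rfl⟩
    exact ⟨x + x', y + y', by push_cast; ring⟩
  algebraMap_mem' := fun q => ⟨q, 0, by norm_num⟩
  one_mem' := ⟨1, 0, by norm_num⟩
  zero_mem' := ⟨0, 0, by norm_num⟩

lemma Qsqrt_inv_mem (p : ℕ) (hp : p.Prime) : ∀ z ∈ Qsqrt p, z⁻¹ ∈ Qsqrt p := by
  rintro z ⟨x, y, rfl⟩
  set r := Real.sqrt p with hrdef
  have hr : r * r = (p : ℝ) := Real.mul_self_sqrt (by positivity)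
  by_cases hz : (x : ℝ) + (y : ℝ) * r = 0
  · rw [hz]
    simp only [inv_zero]
    exact ⟨0, 0, by norm_num⟩
  · have hd : x ^ 2 - (p : ℚ) * y ^ 2 ≠ 0 := by
      intro h0
      obtain ⟨hx0, hy0⟩ : x = 0 ∧ y = 0 := by
        by_cases hy : y = 0
        · refine ⟨?_, hy⟩
          rw [hy] at h0; push_cast at h0
          have : x ^ 2 = 0 := by linarith
          exact pow_eq_zero_iff (by norm_num) |>.mp this
        · exfalso
          refine hp.irrational_sqrt ⟨|x / y|, ?_⟩
          have hyR : (y : ℚ) ≠ 0 := hy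
          have hsq : (x / y) ^ 2 = (p : ℚ) := by field_simp at h0 ⊢; linarith
          have : ((|x / y| : ℚ) : ℝ) ^ 2 = (p : ℝ) := by
            push_cast
            rw [← abs_pow]
            rw [show ((x : ℝ) / y) ^ 2 = (((x / y) ^ 2 : ℚ) : ℝ) by push_cast; ring, hsq]
            simp [abs_of_nonneg (by positivity : (0:ℝ) ≤ (p:ℝ))]
          rw [← this, Real.sqrt_sq (by positivity)]
      exact hz (by rw [hx0, hy0]; norm_num)
    refine ⟨x / (x ^ 2 - p * y ^ 2), -y / (x ^ 2 - p * y ^ 2), ?_⟩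
    have hdR : ((x ^ 2 - (p : ℚ) * y ^ 2 : ℚ) : ℝ) ≠ 0 := by
      exact_mod_cast hd
    refine (eq_inv_of_mul_eq_one_left ?_).symm
    have key : ((x : ℝ) - (y : ℝ) * r) * ((x : ℝ) + (y : ℝ) * r)
        = ((x ^ 2 - (p : ℚ) * y ^ 2 : ℚ) : ℝ) := by
      push_cast
      linear_combination (-(y : ℝ) ^ 2) * hr
    have hw : ((x / (x ^ 2 - (p:ℚ) * y ^ 2) : ℚ) : ℝ)
        + ((-y / (x ^ 2 - (p:ℚ) * y ^ 2) : ℚ) : ℝ) * r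
        = ((x : ℝ) - (y : ℝ) * r) / ((x ^ 2 - (p : ℚ) * y ^ 2 : ℚ) : ℝ) := by
      push_cast
      field_simp
      ring
    rw [hw, div_mul_eq_mul_div, key, div_self hdR]

lemma mem_decomp {p : ℕ} (hp : p.Prime) {F : IntermediateField ℚ ℝ}
    (hF : F = IntermediateField.adjoin ℚ {Real.sqrt p}) {z : ℝ} (hz : z ∈ F) :
    ∃ x y : ℚ, z = (x : ℝ) + (y : ℝ) * Real.sqrt p := by
  have hle : F ≤ (Qsqrt p).toIntermediateField (Qsqrt_inv_mem p hp) := by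
    rw [hF]
    refine IntermediateField.adjoin_le_iff.mpr ?_
    rintro w rfl
    exact ⟨0, 1, by norm_num⟩
  exact hle hz

lemma two_dvd_of_zmod4 (A : ℤ) (h : (A : ZMod 4) = 0 ∨ (A : ZMod 4) = 2) : 2 ∣ A := by
  rcases h with h | h
  · obtain ⟨c, hc⟩ := (ZMod.intCast_zmod_eq_zero_iff_dvd A 4).mp h
    exact ⟨2 * c, by omega⟩
  · have h2 : ((A - 2 : ℤ) : ZMod 4) = 0 := by push_cast; rw [h]; ring
    obtain ⟨c, hc⟩ := (ZMod.intCast_zmod_eq_zero_iff_dvd _ 4).mp h2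
    exact ⟨2 * c + 1, by omega⟩

lemma both_even {p A B N : ℤ} (hp4 : p % 4 = 3) (h : A ^ 2 - p * B ^ 2 = 4 * N) :
    2 ∣ A ∧ 2 ∣ B := by
  obtain ⟨k, hk⟩ : ∃ k, p = 4 * k + 3 := ⟨p / 4, by omega⟩
  have h4 : ∀ a b : ZMod 4, a ^ 2 - 3 * b ^ 2 = 0 → (a = 0 ∨ a = 2) ∧ (b = 0 ∨ b = 2) := by
    decide
  have h40 : ((4 : ℤ) : ZMod 4) = 0 := by decide
  have hc := congrArg (Int.cast : ℤ → ZMod 4) h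
  push_cast [hk] at hc
  push_cast at h40
  have key : (A : ZMod 4) ^ 2 - 3 * (B : ZMod 4) ^ 2 = 0 := by
    linear_combination hc + ((k : ZMod 4) * (B : ZMod 4) ^ 2 + (N : ZMod 4)) * h40
  obtain ⟨hA, hB⟩ := h4 _ _ key
  exact ⟨two_dvd_of_zmod4 A hA, two_dvd_of_zmod4 B hB⟩

lemma coords_int {p : ℕ} (hp : p.Prime) (hp4 : p % 4 = 3) {x y : ℚ}
    (hint : IsIntegral ℤ ((x : ℝ) + (y : ℝ) * Real.sqrt p)) :
    ∃ a b : ℤ, (a : ℚ) = x ∧ (b : ℚ) = y := by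
  set r : ℝ := Real.sqrt p with hrdef
  have hr : r * r = (p : ℝ) := Real.mul_self_sqrt (by positivity)
  by_cases hy : y = 0
  · subst hy
    have h1 : IsIntegral ℤ ((x : ℝ)) := by simpa using hint
    have h2 : IsIntegral ℤ (x : ℚ) :=
      (isIntegral_algebraMap_iff (algebraMap ℚ ℝ).injective).mp h1
    obtain ⟨a, ha⟩ := IsIntegrallyClosed.isIntegral_iff.mp h2
    exact ⟨a, 0, by exact_mod_cast ha, by norm_num⟩
  -- the minimal polynomial of α is X² - 2x X + (x² - p y²)
  set α : ℝ := (x : ℝ) + (y : ℝ) * r with hαdef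
  have hirr : Irrational α := by
    rw [hαdef, hrdef, add_comm]
    exact ((hp.irrational_sqrt.ratCast_mul hy).add_ratCast (q := x) : Irrational _)
  have hQint : IsIntegral ℚ α := hint.tower_top
  set P : ℚ[X] := X ^ 2 - C (2 * x) * X + C (x ^ 2 - p * y ^ 2) with hPdef
  have hPdeg : P.natDegree = 2 := by rw [hPdef]; compute_degree!
  have hPmonic : P.Monic := by rw [hPdef]; monicity!
  have hroot : Polynomial.aeval α P = 0 := by
    rw [hPdef]
    simp only [map_add, map_sub, map_mul, map_pow, aeval_X, aeval_C, eq_ratCast]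
    rw [hαdef]
    push_cast
    linear_combination (y : ℝ) ^ 2 * hr
  have hdvd : minpoly ℚ α ∣ P := minpoly.dvd ℚ α hroot
  have hnotrange : α ∉ (algebraMap ℚ ℝ).range := by
    rintro ⟨q, hq⟩
    exact hirr ⟨q, hq⟩
  have h2le : 2 ≤ (minpoly ℚ α).natDegree := (minpoly.two_le_natDegree_iff hQint).mpr hnotrange
  have hPeq : P = minpoly ℚ α := by
    refine Polynomial.eq_of_monic_of_dvd_of_natDegree_le (minpoly.monic hQint) hPmonic
      hdvd (hPdeg ▸ h2le)
  have hZmap : minpoly ℚ α = (minpoly ℤ α).map (algebraMap ℤ ℚ) :=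
    minpoly.isIntegrallyClosed_eq_field_fractions' ℚ hint
  -- extract integer coefficients
  have hc1 : P.coeff 1 = -(2 * x) := by
    rw [hPdef]
    simp only [coeff_add, coeff_sub, coeff_X_pow, coeff_C_mul, coeff_X, coeff_C]
    norm_num
  have hc0 : P.coeff 0 = x ^ 2 - p * y ^ 2 := by
    rw [hPdef]
    simp only [coeff_add, coeff_sub, coeff_X_pow, coeff_C_mul, coeff_X, coeff_C]
    norm_num
  have hA : ((-(minpoly ℤ α).coeff 1 : ℤ) : ℚ) = 2 * x := by
    have := congrArg (fun q : ℚ[X] => q.coeff 1) (hPeq.trans hZmap)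
    simp only [Polynomial.coeff_map] at this
    rw [hc1] at this
    push_cast
    rw [show ((minpoly ℤ α).coeff 1 : ℚ) = algebraMap ℤ ℚ ((minpoly ℤ α).coeff 1) from rfl]
    linarith [this]
  have hB : (((minpoly ℤ α).coeff 0 : ℤ) : ℚ) = x ^ 2 - p * y ^ 2 := by
    have := congrArg (fun q : ℚ[X] => q.coeff 0) (hPeq.trans hZmap)
    simp only [Polynomial.coeff_map] at this
    rw [hc0] at this
    exact this.symm
  set A : ℤ := -(minpoly ℤ α).coeff 1 with hAdef
  set B : ℤ := (minpoly ℤ α).coeff 0 with hBdef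
  -- p * (2y)² = A² - 4B
  have hM : (p : ℚ) * (2 * y) ^ 2 = ((A ^ 2 - 4 * B : ℤ) : ℚ) := by
    push_cast
    linear_combination (-(A : ℚ) - 2 * x) * hA + 4 * hB
  obtain ⟨b2, hb2⟩ := rat_int_of_prime_mul_sq p hp (2 * y) (A ^ 2 - 4 * B) hM
  -- A² - p b2² = 4 B over ℤ
  have hZrel : A ^ 2 - (p : ℤ) * b2 ^ 2 = 4 * B := by
    have : (A : ℚ) ^ 2 - (p : ℚ) * (b2 : ℚ) ^ 2 = 4 * (B : ℚ) := by
      rw [hb2, hA]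
      linear_combination -4 * hB
    exact_mod_cast this
  obtain ⟨⟨a, ha⟩, ⟨b, hb⟩⟩ := both_even (p := (p : ℤ)) (by omega) hZrel
  refine ⟨a, b, ?_, ?_⟩
  · have : ((2 * a : ℤ) : ℚ) = 2 * x := by rw [← ha]; exact hA
    push_cast at this
    linarith
  · have : ((2 * b : ℤ) : ℚ) = 2 * y := by rw [← hb]; exact hb2
    push_cast at this
    linarith

theorem two_eq_fundamental_unit_mul_square
    (p : ℕ) (hp : p.Prime) (hp8 : p % 8 = 7)
    (F : IntermediateField ℚ ℝ)
    (hF : F = IntermediateField.adjoin ℚ {Real.sqrt p})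
    [NumberField F]
    (U : (𝓞 F)ˣ) (hU : IsFundamentalUnit F U) :
    ∃ L2 : 𝓞 F,
      (2 : 𝓞 F) = (U : 𝓞 F) * L2 ^ 2 ∧
      Ideal.span {(2 : 𝓞 F)} = Ideal.span {L2} ^ 2 ∧
      Real.sqrt 2 ∈
        IntermediateField.adjoin F {Real.sqrt ((algebraMap (𝓞 F) F (U : 𝓞 F) : F) : ℝ)} := by
  have hppos : (0 : ℝ) < (p : ℝ) := by
    have := hp.pos; positivity
  set r : ℝ := Real.sqrt p with hrdef
  have hr : r * r = (p : ℝ) := Real.mul_self_sqrt hppos.le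
  have hrpos : 0 < r := Real.sqrt_pos.mpr hppos
  have hp4 : p % 4 = 3 := by omega
  have hrF : r ∈ F := by
    rw [hF]; exact IntermediateField.subset_adjoin ℚ _ rfl
  set valH : 𝓞 F →+* ℝ := (algebraMap F ℝ).comp (algebraMap (𝓞 F) F) with hvalH
  have hvalinj : Function.Injective valH :=
    fun a b hab => NumberField.RingOfIntegers.ext ((algebraMap F ℝ).injective hab)
  have hintval : ∀ z : 𝓞 F, IsIntegral ℤ (valH z) := by
    intro z
    obtain ⟨P, hPm, hPe⟩ := z.isIntegral_coe
    refine ⟨P, hPm, ?_⟩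
    have h2 := congrArg (algebraMap F ℝ) hPe
    rw [Polynomial.hom_eval₂, map_zero] at h2
    rwa [show (algebraMap F ℝ).comp (algebraMap ℤ F) = algebraMap ℤ ℝ from
      RingHom.ext_int _ _] at h2
  have hdecomp : ∀ z : 𝓞 F, ∃ a b : ℤ, valH z = (a : ℝ) + (b : ℝ) * r := by
    intro z
    obtain ⟨x, y, hxy⟩ := mem_decomp hp hF (algebraMap (𝓞 F) F z).2
    have hxy' : valH z = (x : ℝ) + (y : ℝ) * r := hxy
    obtain ⟨a, b, hax, hby⟩ := coords_int hp hp4 (x := x) (y := y) (hxy' ▸ hintval z)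
    exact ⟨a, b, by rw [hxy', ← hax, ← hby]; push_cast; ring⟩
  -- the element √p of 𝓞 F
  have hsqrtO : IsIntegral ℤ ((⟨r, hrF⟩ : F) : F) := by
    refine ⟨X ^ 2 - C (p : ℤ), monic_X_pow_sub_C _ two_ne_zero, ?_⟩
    have hsq : (⟨r, hrF⟩ : F) ^ 2 = algebraMap ℤ F (p : ℤ) := by
      apply Subtype.coe_injective
      show (((⟨r, hrF⟩ : F) ^ 2 : F) : ℝ) = ((algebraMap ℤ F (p : ℤ) : F) : ℝ)
      have h1 : ((((⟨r, hrF⟩ : F) ^ 2 : F)) : ℝ) = r ^ 2 := by norm_cast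
      have h2 : ((algebraMap ℤ F (p : ℤ) : F) : ℝ) = (p : ℝ) := by simp
      rw [h1, h2]
      linear_combination hr
    rw [eval₂_sub, eval₂_X_pow, eval₂_C, hsq, sub_self]
  set sO : 𝓞 F := ⟨⟨r, hrF⟩, hsqrtO⟩ with hsOdef
  have hvs : valH sO = r := rfl
  set mk : ℤ → ℤ → 𝓞 F := fun a b => (a : 𝓞 F) + (b : 𝓞 F) * sO with hmkdef
  have hmk : ∀ a b : ℤ, valH (mk a b) = (a : ℝ) + (b : ℝ) * r := by
    intro a b
    rw [hmkdef]
    simp only [map_add, map_mul, map_intCast, hvs]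
  set uR : ℝ := ((algebraMap (𝓞 F) F (U : 𝓞 F) : F) : ℝ) with huRdef
  have hU1 : 1 < uR := hU.1
  have hUvalH : valH (U : 𝓞 F) = uR := rfl
  obtain ⟨t, u, htu⟩ := hdecomp (U : 𝓞 F)
  obtain ⟨t', u', htu'⟩ := hdecomp ((U⁻¹ : (𝓞 F)ˣ) : 𝓞 F)
  have hprod : valH ((U : 𝓞 F) * ((U⁻¹ : (𝓞 F)ˣ) : 𝓞 F)) = 1 := by
    rw [Units.mul_inv]; exact map_one valH
  rw [map_mul, htu, htu'] at hprod
  have hcomp : (((t * t' + (p : ℤ) * (u * u') - 1 : ℤ) : ℚ) : ℝ)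
      + (((t * u' + u * t' : ℤ) : ℚ) : ℝ) * r = 0 := by
    push_cast
    linear_combination hprod - (u : ℝ) * (u' : ℝ) * hr
  obtain ⟨hz1, hz2⟩ := repr_eq_zero hp hcomp
  have he1 : t * t' + (p : ℤ) * (u * u') - 1 = 0 := by exact_mod_cast hz1
  have he2 : t * u' + u * t' = 0 := by exact_mod_cast hz2
  have hNN : (t ^ 2 - (p : ℤ) * u ^ 2) * (t' ^ 2 - (p : ℤ) * u' ^ 2) = 1 := by
    linear_combination (t * t' + (p : ℤ) * (u * u') + 1) * he1
      - (p : ℤ) * (t * u' + u * t') * he2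
  have hN : t ^ 2 - (p : ℤ) * u ^ 2 = 1 := by
    rcases Int.isUnit_iff.mp (IsUnit.of_mul_eq_one _ hNN) with h1 | h1
    · exact h1
    · exact absurd (no_neg_one_sq p hp hp4 u t (by linarith only [h1])) not_false
  have hUval : uR = (t : ℝ) + (u : ℝ) * r := by rw [← hUvalH]; exact htu
  have hNR : (t : ℝ) ^ 2 - (p : ℝ) * (u : ℝ) ^ 2 = 1 := by exact_mod_cast hN
  have hinv : uR * ((t : ℝ) - (u : ℝ) * r) = 1 := by
    rw [hUval]
    linear_combination hNR - (u : ℝ) ^ 2 * hr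
  have hconj_pos : 0 < (t : ℝ) - (u : ℝ) * r := by nlinarith [hU1, hinv]
  have hconj_lt : (t : ℝ) - (u : ℝ) * r < 1 := by nlinarith [hU1, hinv, hconj_pos]
  have ht1 : 1 ≤ t := by
    have h0 : (0 : ℝ) < (t : ℝ) := by nlinarith [hU1, hconj_pos, hUval]
    exact_mod_cast Int.cast_pos.mp h0
  have hu1 : 1 ≤ u := by
    have h0 : (0 : ℝ) < (u : ℝ) := by nlinarith [hU1, hconj_lt, hrpos, hUval]
    exact_mod_cast Int.cast_pos.mp h0
  rcases pell_cases p hp hp8 t u ht1 hu1 hN with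
    ⟨a, b, ha1, hb1, hab2, habu, habt⟩ | ⟨a, b, ha1, hb1, hab1, habu, habt⟩
  · -- main case : a² - p b² = 2, a b = u, a² + p b² = 2t
    have haR : (1 : ℝ) ≤ (a : ℝ) := by exact_mod_cast ha1
    have hbR : (1 : ℝ) ≤ (b : ℝ) := by exact_mod_cast hb1
    have habtR : (a : ℝ) ^ 2 + (p : ℝ) * (b : ℝ) ^ 2 = 2 * (t : ℝ) := by exact_mod_cast habt
    have habuR : (a : ℝ) * (b : ℝ) = (u : ℝ) := by exact_mod_cast habu
    set w : 𝓞 F := ((U⁻¹ : (𝓞 F)ˣ) : 𝓞 F) with hwdef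
    have hUw : (U : 𝓞 F) * w = 1 := U.mul_inv
    have hLsq : (mk a b) ^ 2 = 2 * (U : 𝓞 F) := by
      apply hvalinj
      rw [map_pow, map_mul, hmk, hUvalH, hUval, map_ofNat]
      linear_combination (2 * r) * habuR + habtR + (b : ℝ) ^ 2 * hr
    have hmain : (2 : 𝓞 F) = (U : 𝓞 F) * (w * mk a b) ^ 2 := by
      have h2 : (U : 𝓞 F) * (w * mk a b) ^ 2 = 2 * ((U : 𝓞 F) * w) ^ 2 := by
        rw [mul_pow, hLsq]; ring
      rw [h2, hUw]; norm_num
    have h2w : (w * mk a b) ^ 2 = 2 * w := by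
      rw [mul_pow, hLsq]
      linear_combination 2 * w * hUw
    refine ⟨w * mk a b, hmain, ?_, ?_⟩
    · rw [Ideal.span_singleton_pow, Ideal.span_singleton_eq_span_singleton]
      exact ⟨U⁻¹, h2w.symm⟩
    · set l : ℝ := valH (w * mk a b) with hldef
      have h2R : (2 : ℝ) = uR * l ^ 2 := by
        have hc := congrArg valH hmain
        rw [map_mul, map_pow, map_ofNat, hUvalH] at hc
        exact hc
      have hsq2 : Real.sqrt 2 = Real.sqrt uR * |l| := by
        rw [h2R, Real.sqrt_mul (by linarith [hU1] : (0:ℝ) ≤ uR), Real.sqrt_sq_eq_abs]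
      rw [hsq2]
      have hsmem : Real.sqrt uR ∈
          IntermediateField.adjoin F {Real.sqrt uR} :=
        IntermediateField.subset_adjoin F _ rfl
      have hlmem : l ∈ IntermediateField.adjoin F {Real.sqrt uR} := by
        exact IntermediateField.algebraMap_mem _ (algebraMap (𝓞 F) F (w * mk a b))
      rcases abs_cases l with ⟨h, _⟩ | ⟨h, _⟩
      · rw [h]; exact mul_mem hsmem hlmem
      · rw [h]; exact mul_mem hsmem (neg_mem hlmem)
  · -- impossible case : would give a smaller unit
    exfalso
    have haR : (1 : ℝ) ≤ (a : ℝ) := by exact_mod_cast ha1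
    have hbR : (1 : ℝ) ≤ (b : ℝ) := by exact_mod_cast hb1
    have hab1R : (a : ℝ) ^ 2 - (p : ℝ) * (b : ℝ) ^ 2 = 1 := by exact_mod_cast hab1
    have habtR : (a : ℝ) ^ 2 + (p : ℝ) * (b : ℝ) ^ 2 = (t : ℝ) := by exact_mod_cast habt
    have habuR : 2 * ((a : ℝ) * (b : ℝ)) = (u : ℝ) := by exact_mod_cast habu
    have hVmul : mk a b * mk a (-b) = 1 := by
      apply hvalinj
      rw [map_mul, hmk, hmk, map_one]
      push_cast
      linear_combination hab1R - (b : ℝ) ^ 2 * hr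
    set V : (𝓞 F)ˣ := ⟨mk a b, mk a (-b), hVmul, by rw [mul_comm]; exact hVmul⟩ with hVdef
    have hvmk : 1 < valH (mk a b) := by
      rw [hmk]
      nlinarith [haR, hbR, hrpos]
    have hle : uR ≤ valH (mk a b) := hU.2 V hvmk
    have hVsq : valH (mk a b) ^ 2 = uR := by
      rw [hmk, hUval]
      linear_combination r * habuR + habtR + (b : ℝ) ^ 2 * hr
    have hlt : valH (mk a b) < valH (mk a b) ^ 2 := by
      nlinarith [mul_pos (by linarith only [hvmk] : (0:ℝ) < valH (mk a b) - 1)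
        (by linarith only [hvmk] : (0:ℝ) < valH (mk a b))]
    linarith only [hle, hVsq, hlt]
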